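/- Let k be a field of characteristic zero and F a monic polynomial of degree d over k with roots in an algebraic closure. Then F has exactly l distinct roots in the algebraic closure if and only if the generalized discriminants satisfy D_1 = ⋯ = D_{d-l} = 0 and D_{d-l+1} ≠ 0. -/

import Mathlib

open Finset Polynomial Classical

/-- Squared Vandermonde product over a subset of root indices. -/
noncomputable def vanderSq {K : Type*} [CommRing K] {d : ℕ} (ξ : Fin d → K)
    (s : Finset (Fin d)) : K :=
  ∏ p ∈ (s ×ˢ s).filter (fun p => p.1 < p.2), (ξ p.2 - ξ p.1) ^ 2

/-- The generalized discriminant `D_{d+1-l}` in terms of the roots: the sum over all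
`l`-element subsets of the roots of the squared Vandermonde product. -/
noncomputable def genDiscRoots {K : Type*} [CommRing K] {d : ℕ} (ξ : Fin d → K)
    (l : ℕ) : K :=
  ∑ s ∈ Finset.powersetCard l (Finset.univ : Finset (Fin d)), vanderSq ξ s

section Aux

variable {K : Type*} [Field K] [CharZero K] {d : ℕ} (ξ : Fin d → K)

lemma vanderSq_eq_zero {s : Finset (Fin d)} (h : ¬ Set.InjOn ξ s) : vanderSq ξ s = 0 := by
  classical
  rw [Set.InjOn] at h
  push_neg at h
  obtain ⟨i, hi, j, hj, heq, hne⟩ := h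
  simp only [Finset.mem_coe] at hi hj
  rcases hne.lt_or_gt with hlt | hlt
  · apply Finset.prod_eq_zero (i := (i, j))
    · simp [Finset.mem_filter, Finset.mem_product, hi, hj, hlt]
    · simp [heq]
  · apply Finset.prod_eq_zero (i := (j, i))
    · simp [Finset.mem_filter, Finset.mem_product, hi, hj, hlt]
    · simp [heq]

lemma offDiag_split (s : Finset (Fin d)) :
    s.offDiag = (s ×ˢ s).filter (fun p => p.1 < p.2) ∪ (s ×ˢ s).filter (fun p => p.2 < p.1) := by
  ext p
  simp only [Finset.mem_offDiag, Finset.mem_union, Finset.mem_filter, Finset.mem_product]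
  constructor
  · rintro ⟨h1, h2, h3⟩
    rcases h3.lt_or_gt with h | h
    · exact Or.inl ⟨⟨h1, h2⟩, h⟩
    · exact Or.inr ⟨⟨h1, h2⟩, h⟩
  · rintro (⟨⟨h1, h2⟩, h⟩ | ⟨⟨h1, h2⟩, h⟩)
    · exact ⟨h1, h2, h.ne⟩
    · exact ⟨h1, h2, h.ne'⟩

lemma offDiag_disj (s : Finset (Fin d)) :
    Disjoint ((s ×ˢ s).filter (fun p => p.1 < p.2)) ((s ×ˢ s).filter (fun p => p.2 < p.1)) := by
  rw [Finset.disjoint_left]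
  intro p hp hq
  simp only [Finset.mem_filter] at hp hq
  exact absurd hq.2 (lt_asymm hp.2)

lemma card_filter_lt (s : Finset (Fin d)) :
    2 * ((s ×ˢ s).filter (fun p => p.1 < p.2)).card = s.card * s.card - s.card := by
  have hswap : ((s ×ˢ s).filter (fun p => p.2 < p.1)).card
      = ((s ×ˢ s).filter (fun p => p.1 < p.2)).card := by
    apply Finset.card_nbij' (fun p => (p.2, p.1)) (fun p => (p.2, p.1)) <;>
      simp only [Set.MapsTo, Set.LeftInvOn, Finset.mem_coe, Finset.mem_filter, Finset.mem_product] <;> intro p hp <;> tauto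
  have hcard : s.offDiag.card = ((s ×ˢ s).filter (fun p => p.1 < p.2)).card
      + ((s ×ˢ s).filter (fun p => p.2 < p.1)).card := by
    rw [offDiag_split, Finset.card_union_of_disjoint (offDiag_disj s)]
  have := Finset.offDiag_card s
  omega

lemma prod_offDiag_eq (s : Finset (Fin d)) :
    ∏ p ∈ s.offDiag, (ξ p.2 - ξ p.1) =
      (-1 : K) ^ ((s ×ˢ s).filter (fun p => p.1 < p.2)).card * vanderSq ξ s := by
  classical
  rw [offDiag_split, Finset.prod_union (offDiag_disj s)]
  have hswap : ∏ p ∈ (s ×ˢ s).filter (fun p => p.2 < p.1), (ξ p.2 - ξ p.1)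
      = ∏ p ∈ (s ×ˢ s).filter (fun p => p.1 < p.2), (ξ p.1 - ξ p.2) := by
    apply Finset.prod_nbij' (fun p => (p.2, p.1)) (fun p => (p.2, p.1)) <;>
      simp only [Finset.mem_filter, Finset.mem_product] <;> intro p hp <;> tauto
  rw [hswap, ← Finset.prod_mul_distrib, vanderSq]
  rw [Finset.prod_congr rfl (g := fun p => (-1 : K) * (ξ p.2 - ξ p.1) ^ 2)
    (fun p _ => by ring)]
  rw [Finset.prod_mul_distrib, Finset.prod_const]

lemma prod_offDiag_image {s : Finset (Fin d)} (hs : Set.InjOn ξ s) :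
    ∏ p ∈ s.offDiag, (ξ p.2 - ξ p.1) = ∏ q ∈ (s.image ξ).offDiag, (q.2 - q.1) := by
  classical
  apply Finset.prod_nbij (fun p => (ξ p.1, ξ p.2))
  · intro p hp
    rw [Finset.mem_offDiag] at hp ⊢
    refine ⟨Finset.mem_image_of_mem _ hp.1, Finset.mem_image_of_mem _ hp.2.1, ?_⟩
    intro h
    exact hp.2.2 (hs hp.1 hp.2.1 h)
  · intro p hp q hq hpq
    simp only [Finset.coe_offDiag, Set.mem_offDiag] at hp hq
    simp only [Prod.mk.injEq] at hpq
    exact Prod.ext (hs hp.1 hq.1 hpq.1) (hs hp.2.1 hq.2.1 hpq.2)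
  · intro q hq
    simp only [Finset.coe_offDiag, Set.mem_offDiag, Finset.mem_coe, Finset.mem_image] at hq
    obtain ⟨⟨i, hi, hi'⟩, ⟨j, hj, hj'⟩, hne⟩ := hq
    refine ⟨(i, j), ?_, ?_⟩
    · simp only [Finset.coe_offDiag, Set.mem_offDiag, Finset.mem_coe]
      exact ⟨hi, hj, fun h => hne (by rw [← hi', ← hj', h])⟩
    · simp [hi', hj']
  · intro p hp
    rfl

lemma vanderSq_inj {s : Finset (Fin d)} (hs : Set.InjOn ξ s) :
    vanderSq ξ s = (-1 : K) ^ ((s.card * s.card - s.card) / 2)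
      * ∏ q ∈ (s.image ξ).offDiag, (q.2 - q.1) := by
  have h1 := prod_offDiag_eq ξ s
  have h2 := card_filter_lt s
  have hN : ((s ×ˢ s).filter (fun p => p.1 < p.2)).card = (s.card * s.card - s.card) / 2 := by
    omega
  have key : vanderSq ξ s = (-1 : K) ^ ((s ×ˢ s).filter (fun p => p.1 < p.2)).card
      * ∏ p ∈ s.offDiag, (ξ p.2 - ξ p.1) := by
    rw [h1, ← mul_assoc, ← pow_add, ← two_mul, pow_mul, neg_one_sq, one_pow, one_mul]
  rw [key, hN, prod_offDiag_image ξ hs]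

lemma genDisc_eq_zero {n : ℕ} (hn : (Finset.image ξ Finset.univ).card < n) :
    genDiscRoots ξ n = 0 := by
  classical
  apply Finset.sum_eq_zero
  intro s hs
  rw [Finset.mem_powersetCard] at hs
  apply vanderSq_eq_zero
  intro hinj
  have h1 : s.image ξ ⊆ Finset.image ξ Finset.univ :=
    Finset.image_subset_image (Finset.subset_univ s)
  have h2 : (s.image ξ).card = s.card := Finset.card_image_of_injOn hinj
  have := Finset.card_le_card h1
  omega

lemma genDisc_card_ne_zero : genDiscRoots ξ (Finset.image ξ Finset.univ).card ≠ 0 := by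
  classical
  set T := Finset.image ξ Finset.univ with hT
  set c := T.card with hc
  set V : K := (-1 : K) ^ ((c * c - c) / 2) * ∏ q ∈ T.offDiag, (q.2 - q.1) with hV
  have hVne : V ≠ 0 := by
    apply mul_ne_zero (pow_ne_zero _ (by norm_num))
    rw [Finset.prod_ne_zero_iff]
    intro q hq
    rw [Finset.mem_offDiag] at hq
    exact sub_ne_zero.mpr (Ne.symm hq.2.2)
  have key : ∀ s ∈ Finset.powersetCard c (Finset.univ : Finset (Fin d)),
      Set.InjOn ξ s → vanderSq ξ s = V := by
    intro s hsmem hinj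
    rw [Finset.mem_powersetCard] at hsmem
    have hcard : s.card = c := hsmem.2
    have himg : s.image ξ = T := by
      apply Finset.eq_of_subset_of_card_le (Finset.image_subset_image (Finset.subset_univ s))
      rw [Finset.card_image_of_injOn hinj, hcard]
    rw [vanderSq_inj ξ hinj, hcard, himg]
  -- a witness injective transversal
  have hwit : ∃ s₀ ∈ Finset.powersetCard c (Finset.univ : Finset (Fin d)), Set.InjOn ξ s₀ := by
    have hex : ∀ a : {x // x ∈ T}, ∃ i : Fin d, ξ i = a.1 := by
      rintro ⟨a, ha⟩
      rw [hT, Finset.mem_image] at ha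
      obtain ⟨i, _, hi⟩ := ha
      exact ⟨i, hi⟩
    choose f hf using hex
    have hfval : ∀ a : {x // x ∈ T}, ξ (f a) = a.1 := hf
    have hfinj : Function.Injective f := by
      intro a b hab
      apply Subtype.ext
      rw [← hfval a, ← hfval b, hab]
    refine ⟨T.attach.image f, ?_, ?_⟩
    · rw [Finset.mem_powersetCard]
      refine ⟨Finset.subset_univ _, ?_⟩
      rw [Finset.card_image_of_injective _ hfinj, Finset.card_attach]
    · intro x hx y hy hxy
      simp only [Finset.coe_image, Set.mem_image, Finset.mem_coe, Finset.mem_attach] at hx hy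
      obtain ⟨a, _, rfl⟩ := hx
      obtain ⟨b, _, rfl⟩ := hy
      rw [hfval a, hfval b] at hxy
      rw [Subtype.ext hxy]
  obtain ⟨s₀, hs₀mem, hs₀inj⟩ := hwit
  rw [genDiscRoots]
  rw [← Finset.sum_filter_add_sum_filter_not
    (Finset.powersetCard c (Finset.univ : Finset (Fin d)))
    (fun s : Finset (Fin d) => Set.InjOn ξ ↑s)]
  have hz : ∑ s ∈ (Finset.powersetCard c (Finset.univ : Finset (Fin d))).filter
      (fun s : Finset (Fin d) => ¬ Set.InjOn ξ ↑s), vanderSq ξ s = 0 :=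
    Finset.sum_eq_zero fun s hs => vanderSq_eq_zero ξ (Finset.mem_filter.mp hs).2
  rw [hz, add_zero]
  rw [Finset.sum_congr rfl
    (fun s hs => key s (Finset.mem_filter.mp hs).1 (Finset.mem_filter.mp hs).2)]
  rw [Finset.sum_const, nsmul_eq_mul]
  apply mul_ne_zero _ hVne
  rw [Nat.cast_ne_zero]
  exact Finset.card_ne_zero_of_mem (Finset.mem_filter.mpr ⟨hs₀mem, hs₀inj⟩)

end Aux

theorem exactly_l_distinct_roots_iff_generalized_discriminants
    (K : Type*) [Field K] [CharZero K] (d l : ℕ) (hl : 1 ≤ l) (hld : l ≤ d)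
    (ξ : Fin d → K) (F : Polynomial K) (hF : F = ∏ i, (X - C (ξ i))) :
    (Finset.image ξ Finset.univ).card = l ↔
      (∀ m ∈ Finset.Icc 1 (d - l), genDiscRoots ξ (d + 1 - m) = 0) ∧
        genDiscRoots ξ (d + 1 - (d - l + 1)) ≠ 0 := by
  have hld' : d + 1 - (d - l + 1) = l := by omega
  have hcd : (Finset.image ξ Finset.univ).card ≤ d := by
    calc (Finset.image ξ Finset.univ).card ≤ (Finset.univ : Finset (Fin d)).card :=
      Finset.card_image_le
    _ = d := by simp
  constructor
  · intro h
    refine ⟨fun m hm => genDisc_eq_zero ξ ?_, ?_⟩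
    · rw [Finset.mem_Icc] at hm
      omega
    · rw [hld', ← h]
      exact genDisc_card_ne_zero ξ
  · rintro ⟨h1, h2⟩
    rcases lt_trichotomy (Finset.image ξ Finset.univ).card l with h | h | h
    · exact absurd (by rw [hld']; exact genDisc_eq_zero ξ h) h2
    · exact h
    · exfalso
      apply genDisc_card_ne_zero ξ
      have hm := h1 (d + 1 - (Finset.image ξ Finset.univ).card)
        (by rw [Finset.mem_Icc]; omega)
      rwa [show d + 1 - (d + 1 - (Finset.image ξ Finset.univ).card)
        = (Finset.image ξ Finset.univ).card from by omega] at hm
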